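/- If (a_n) and (a'_n) are increasing computable rational sequences converging to the same real A, and there exists c < 1 with A - a'_n < c(A - a_n) for all n, then A is computable (there is a computable function giving rational approximations of A to within any prescribed 2^{-k}). -/

import Mathlib

open Filter


open Encodable

namespace CFS

noncomputable abbrev e0 : ℚ → ℕ := @Encodable.encode ℚ Rat.instEncodable

def half (x : ℕ) : ℕ := (x + x % 2) / 2

def Spred (v d : ℕ) : ℕ → Prop := fun k => v % k = 0 ∧ d % k = 0 ∧ 0 < k

instance (v d : ℕ) : DecidablePred (Spred v d) := fun _ => by unfold Spred; infer_instance

def inS (m : ℕ) : Prop :=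
  0 < m.unpair.2 ∧
    Nat.findGreatest (Spred (half m.unpair.1) m.unpair.2) m.unpair.2 = 1

instance : DecidablePred inS := fun m => by unfold inS; infer_instance

def cnt (m : ℕ) : ℕ := (List.range m).countP fun y => decide (inS y)

theorem intEquivNat_ofNat (m : ℕ) : (Equiv.intEquivNat (Int.ofNat m) : ℕ) = 2 * m := rfl
theorem intEquivNat_negSucc (m : ℕ) :
    (Equiv.intEquivNat (Int.negSucc m) : ℕ) = 2 * m + 1 := rfl

theorem half_intEquivNat (p : ℤ) : half (Equiv.intEquivNat p) = p.natAbs := by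
  rcases p with m | m
  · rw [intEquivNat_ofNat, half]; simp
  · rw [intEquivNat_negSucc, half, Int.natAbs_negSucc]; omega

theorem parity_intEquivNat (p : ℤ) : (Equiv.intEquivNat p : ℕ) % 2 = 0 ↔ 0 ≤ p := by
  rcases p with m | m
  · rw [intEquivNat_ofNat]; simp [Int.ofNat_nonneg]
  · rw [intEquivNat_negSucc]; simp [Int.negSucc_not_nonneg]

theorem findGreatest_eq_gcd (v d : ℕ) (hd : 0 < d) :
    Nat.findGreatest (Spred v d) d = Nat.gcd v d := by
  have hpred : ∀ k, Spred v d k ↔ (k ∣ v ∧ k ∣ d ∧ 0 < k) := by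
    intro k
    unfold Spred
    rw [Nat.dvd_iff_mod_eq_zero, Nat.dvd_iff_mod_eq_zero]
  have hg0 : 0 < Nat.gcd v d := Nat.gcd_pos_of_pos_right _ hd
  have hgle : Nat.gcd v d ≤ d := Nat.le_of_dvd hd (Nat.gcd_dvd_right _ _)
  have hgP : Spred v d (Nat.gcd v d) :=
    (hpred _).2 ⟨Nat.gcd_dvd_left _ _, Nat.gcd_dvd_right _ _, hg0⟩
  have h1 : Nat.gcd v d ≤ Nat.findGreatest (Spred v d) d :=
    Nat.le_findGreatest hgle hgP
  have hspec : Spred v d (Nat.findGreatest (Spred v d) d) :=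
    Nat.findGreatest_spec hgle hgP
  rcases (hpred _).1 hspec with ⟨hv, hdd, _⟩
  exact le_antisymm (Nat.le_of_dvd hg0 (Nat.dvd_gcd hv hdd)) h1

theorem e0_eq (q : ℚ) : e0 q = Nat.pair (Equiv.intEquivNat q.num) q.den := rfl

theorem inS_iff (m : ℕ) : inS m ↔ m ∈ Set.range e0 := by
  constructor
  · rintro ⟨hd, hg⟩
    set x := m.unpair.1 with hx
    set d := m.unpair.2 with hdd
    set p : ℤ := Equiv.intEquivNat.symm x with hp
    have hxp : Equiv.intEquivNat p = x := Equiv.apply_symm_apply _ _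
    have habs : p.natAbs = half x := by rw [← hxp, half_intEquivNat]
    have hcop : p.natAbs.Coprime d := by
      unfold Nat.Coprime
      rw [habs, ← findGreatest_eq_gcd _ _ hd]
      exact hg
    refine ⟨Rat.mk' p d (by omega) hcop, ?_⟩
    rw [e0_eq]
    show Nat.pair (Equiv.intEquivNat p) d = m
    rw [hxp]
    exact Nat.pair_unpair m
  · rintro ⟨q, rfl⟩
    rw [e0_eq]
    constructor
    · simp [Nat.unpair_pair, q.pos]
    · simp only [Nat.unpair_pair]
      rw [half_intEquivNat, findGreatest_eq_gcd _ _ q.pos]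
      exact q.reduced

attribute [local instance] Encodable.decidableRangeEncode

theorem encode_eq (q : ℚ) :
    @Encodable.encode ℚ (Primcodable.toEncodable) q = cnt (e0 q) := by
  have h0 : @Encodable.encode ℚ (Primcodable.toEncodable) q =
      (List.range (e0 q)).countP (fun y => decide (y ∈ Set.range e0)) := rfl
  rw [h0, cnt]
  apply List.countP_congr
  intro y _
  simp only [decide_eq_true_eq]
  exact (inS_iff y).symm

end CFS

namespace CFS

theorem cnt_succ (m : ℕ) : cnt (m + 1) = cnt m + if inS m then 1 else 0 := by
  unfold cnt
  rw [List.range_succ, List.countP_append]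
  by_cases h : inS m <;> simp [h]

theorem cnt_lt_cnt {m M : ℕ} (h : inS m) (hlt : m < M) : cnt m < cnt M := by
  have step : cnt m < cnt (m + 1) := by rw [cnt_succ]; simp [h]
  have mono : ∀ i j : ℕ, i ≤ j → cnt i ≤ cnt j := by
    intro i j hij
    induction j with
    | zero => have : i = 0 := by omega
              subst this; exact le_refl _
    | succ j ih =>
      rcases Nat.lt_or_ge i (j+1) with hh | hh
      · have := ih (by omega)
        rw [cnt_succ]
        split <;> omega
      · have : i = j + 1 := by omega
        subst this; exact le_refl _
  exact lt_of_lt_of_le step (mono _ _ hlt)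

theorem exists_dec (N : ℕ) : ∃ m, inS m ∧ cnt m = N := by
  obtain q := Denumerable.ofNat ℚ N
  refine ⟨e0 (Denumerable.ofNat ℚ N), ?_, ?_⟩
  · exact (inS_iff _).2 ⟨_, rfl⟩
  · rw [← encode_eq]
    exact Denumerable.encode_ofNat N

noncomputable def dec (N : ℕ) : ℕ := Nat.find (exists_dec N)

theorem dec_encode (q : ℚ) :
    dec (@Encodable.encode ℚ (Primcodable.toEncodable) q) = e0 q := by
  set N := @Encodable.encode ℚ (Primcodable.toEncodable) q with hN
  have hq : inS (e0 q) ∧ cnt (e0 q) = N := ⟨(inS_iff _).2 ⟨q, rfl⟩, (encode_eq q).symm⟩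
  have hle : dec N ≤ e0 q := Nat.find_le hq
  rcases Nat.lt_or_ge (dec N) (e0 q) with h | h
  · exfalso
    have hspec : inS (dec N) ∧ cnt (dec N) = N := Nat.find_spec (exists_dec N)
    have := cnt_lt_cnt hspec.1 h
    omega
  · omega

end CFS


namespace CFS

open Primrec in
theorem prim_half : Primrec half :=
  Primrec.nat_div.comp
    (Primrec.nat_add.comp Primrec.id (Primrec.nat_mod.comp Primrec.id (const 2)))
    (const 2)

open Primrec in
theorem prim_inS : PrimrecPred inS := by
  have hu1 : Primrec (fun m : ℕ => m.unpair.1) := fst.comp unpair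
  have hu2 : Primrec (fun m : ℕ => m.unpair.2) := snd.comp unpair
  have hrel : PrimrecRel (fun (m k : ℕ) => Spred (half m.unpair.1) m.unpair.2 k) := by
    have h1 : PrimrecPred (fun q : ℕ × ℕ => half q.1.unpair.1 % q.2 = 0) :=
      PrimrecRel.comp Primrec.eq (nat_mod.comp ((prim_half.comp hu1).comp fst) snd) (const 0)
    have h2 : PrimrecPred (fun q : ℕ × ℕ => q.1.unpair.2 % q.2 = 0) :=
      PrimrecRel.comp Primrec.eq (nat_mod.comp (hu2.comp fst) snd) (const 0)
    have h3 : PrimrecPred (fun q : ℕ × ℕ => 0 < q.2) :=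
      PrimrecRel.comp nat_lt (const 0) snd
    have := h1.and (h2.and h3)
    exact this.of_eq (by intro p; rfl)
  have hFG : Primrec (fun m : ℕ =>
      Nat.findGreatest (Spred (half m.unpair.1) m.unpair.2) m.unpair.2) :=
    nat_findGreatest hu2 hrel
  have h1 : PrimrecPred (fun m : ℕ => 0 < m.unpair.2) :=
    PrimrecRel.comp nat_lt (const 0) hu2
  have h2 : PrimrecPred (fun m : ℕ =>
      Nat.findGreatest (Spred (half m.unpair.1) m.unpair.2) m.unpair.2 = 1) :=
    PrimrecRel.comp Primrec.eq hFG (const 1)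
  exact (h1.and h2).of_eq (by intro m; rfl)

open Primrec in
theorem prim_cnt : Primrec cnt := by
  have hstep : Primrec₂ (fun (n : ℕ) (acc : ℕ) => acc + if inS n then 1 else 0) :=
    Primrec.nat_add.comp snd (Primrec.ite (prim_inS.comp fst) (const 1) (const 0))
  refine (Primrec.nat_rec₁ 0 hstep).of_eq ?_
  intro m
  induction m with
  | zero => rfl
  | succ m ih => rw [cnt_succ, ← ih]

open Primrec in
theorem computable_dec : Computable dec := by
  have hb : Computable₂ (fun N n : ℕ => decide (inS n ∧ cnt n = N)) := by
    have : PrimrecRel (fun N n : ℕ => inS n ∧ cnt n = N) :=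
      PrimrecPred.and (prim_inS.comp snd)
        (PrimrecRel.comp Primrec.eq (prim_cnt.comp snd) fst)
    exact this.decide.to_comp
  have hp : Partrec₂ (fun N n : ℕ => (Part.some (decide (inS n ∧ cnt n = N)) : Part Bool)) :=
    hb.partrec₂
  apply Partrec.of_eq_tot (Partrec.rfind hp)
  intro N
  apply Nat.mem_rfind.2
  constructor
  · simp only [Part.mem_some_iff]
    simp [Nat.find_spec (exists_dec N), dec]
  · intro m hm
    simp only [Part.mem_some_iff]
    have := Nat.find_min (exists_dec N) (by simpa [dec] using hm)
    simp [this]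

end CFS


namespace CFS

def shifted (x w M : ℕ) : ℕ := if x % 2 = 0 then M + w else M - w

def tst (cn cd : ℕ) (k m m' : ℕ) : Bool :=
  decide (2 ^ k * cn * shifted m'.unpair.1 (half m'.unpair.1 * m.unpair.2)
        (half m.unpair.1 * m'.unpair.2 + half m'.unpair.1 * m.unpair.2) <
    (cd - cn) * m.unpair.2 * m'.unpair.2 +
      2 ^ k * cn * shifted m.unpair.1 (half m.unpair.1 * m'.unpair.2)
        (half m.unpair.1 * m'.unpair.2 + half m'.unpair.1 * m.unpair.2))

theorem shifted_cast (p : ℤ) (d M : ℕ) (h : p.natAbs * d ≤ M) :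
    ((shifted (Equiv.intEquivNat p) (p.natAbs * d) M : ℕ) : ℤ) = (M : ℤ) + p * d := by
  unfold shifted
  by_cases hp : 0 ≤ p
  · rw [if_pos ((parity_intEquivNat p).2 hp)]
    push_cast
    rw [abs_of_nonneg hp]
  · rw [if_neg (by rw [parity_intEquivNat]; exact hp)]
    push_cast [Nat.cast_sub h]
    rw [abs_of_nonpos (le_of_not_ge hp)]
    ring

theorem tst_iff (cn cd : ℕ) (hle : cn ≤ cd) (k : ℕ) (q q' : ℚ) :
    tst cn cd k (e0 q) (e0 q') = true ↔
      (cn : ℚ) * (q' - q) < ((cd : ℚ) - (cn : ℚ)) * (2⁻¹ : ℚ) ^ k := by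
  have hu1 : (e0 q).unpair.1 = Equiv.intEquivNat q.num := by rw [e0_eq, Nat.unpair_pair]
  have hu2 : (e0 q).unpair.2 = q.den := by rw [e0_eq, Nat.unpair_pair]
  have hv1 : (e0 q').unpair.1 = Equiv.intEquivNat q'.num := by rw [e0_eq, Nat.unpair_pair]
  have hv2 : (e0 q').unpair.2 = q'.den := by rw [e0_eq, Nat.unpair_pair]
  unfold tst
  rw [hu1, hu2, hv1, hv2, half_intEquivNat, half_intEquivNat, decide_eq_true_iff]
  have hc1 := shifted_cast q.num q'.den
    (q.num.natAbs * q'.den + q'.num.natAbs * q.den) (Nat.le_add_right _ _)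
  have hc2 := shifted_cast q'.num q.den
    (q.num.natAbs * q'.den + q'.num.natAbs * q.den) (Nat.le_add_left _ _)
  rw [← Int.ofNat_lt]
  push_cast [Nat.cast_sub hle]
  rw [hc1, hc2]
  rw [← @Int.cast_lt ℚ]
  push_cast
  -- pure ℚ statement now
  have hd1pos : (0:ℚ) < (q.den : ℚ) := by exact_mod_cast q.pos
  have hd2pos : (0:ℚ) < (q'.den : ℚ) := by exact_mod_cast q'.pos
  have h2k : (0:ℚ) < 2 ^ k := by positivity
  have h2kne : (2:ℚ) ^ k ≠ 0 := ne_of_gt h2k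
  have E1 : (q.num : ℚ) = q * (q.den : ℚ) := by
    have h := Rat.num_div_den q
    rw [div_eq_iff (ne_of_gt hd1pos)] at h
    exact h.symm ▸ rfl
  have E2 : (q'.num : ℚ) = q' * (q'.den : ℚ) := by
    have h := Rat.num_div_den q'
    rw [div_eq_iff (ne_of_gt hd2pos)] at h
    exact h.symm ▸ rfl
  have hfac :
      (2:ℚ) ^ k * cn * ((q.num.natAbs : ℚ) * q'.den + (q'.num.natAbs : ℚ) * q.den
          + (q'.num : ℚ) * q.den)
        - (((cd:ℚ) - cn) * q.den * q'.den
          + 2 ^ k * cn * ((q.num.natAbs : ℚ) * q'.den + (q'.num.natAbs : ℚ) * q.den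
          + (q.num : ℚ) * q'.den))
      = ((cn : ℚ) * (q' - q) - ((cd : ℚ) - cn) * (2⁻¹:ℚ) ^ k)
          * ((q.den : ℚ) * q'.den * 2 ^ k) := by
    rw [inv_pow, E1, E2]
    linear_combination ((cd:ℚ) - cn) * (q.den:ℚ) * (q'.den:ℚ) * (mul_inv_cancel₀ h2kne)
  constructor
  · intro h
    nlinarith [hfac, hd1pos, hd2pos, h2k, mul_pos (mul_pos hd1pos hd2pos) h2k]
  · intro h
    nlinarith [hfac, hd1pos, hd2pos, h2k, mul_pos (mul_pos hd1pos hd2pos) h2k]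

end CFS


namespace CFS

open Primrec in
theorem prim_pow2 : Primrec (fun k : ℕ => 2 ^ k) := by
  have hstep : Primrec₂ (fun (_ acc : ℕ) => acc + acc) :=
    Primrec.nat_add.comp snd snd
  refine (Primrec.nat_rec₁ 1 hstep).of_eq ?_
  intro k
  induction k with
  | zero => rfl
  | succ k ih =>
      show (Nat.rec 1 (fun _ acc => acc + acc) k : ℕ) +
          (Nat.rec 1 (fun _ acc => acc + acc) k : ℕ) = 2 ^ (k + 1)
      rw [ih, pow_succ]
      ring

open Primrec in
theorem prim_shifted : Primrec (fun t : ℕ × ℕ × ℕ => shifted t.1 t.2.1 t.2.2) :=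
  Primrec.ite (PrimrecRel.comp Primrec.eq (nat_mod.comp fst (const 2)) (const 0))
    (nat_add.comp (snd.comp snd) (fst.comp snd))
    (nat_sub.comp (snd.comp snd) (fst.comp snd))

open Primrec in
theorem comp_tst (cn cd : ℕ) :
    Computable (fun p : ℕ × ℕ × ℕ => tst cn cd p.1 p.2.1 p.2.2) := by
  have k : Primrec (fun p : ℕ × ℕ × ℕ => p.1) := fst
  have m : Primrec (fun p : ℕ × ℕ × ℕ => p.2.1) := fst.comp snd
  have m' : Primrec (fun p : ℕ × ℕ × ℕ => p.2.2) := snd.comp snd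
  have x1 : Primrec (fun p : ℕ × ℕ × ℕ => p.2.1.unpair.1) := fst.comp (unpair.comp m)
  have d1 : Primrec (fun p : ℕ × ℕ × ℕ => p.2.1.unpair.2) := snd.comp (unpair.comp m)
  have x2 : Primrec (fun p : ℕ × ℕ × ℕ => p.2.2.unpair.1) := fst.comp (unpair.comp m')
  have d2 : Primrec (fun p : ℕ × ℕ × ℕ => p.2.2.unpair.2) := snd.comp (unpair.comp m')
  have w1 : Primrec (fun p : ℕ × ℕ × ℕ => half p.2.1.unpair.1 * p.2.2.unpair.2) :=
    nat_mul.comp (prim_half.comp x1) d2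
  have w2 : Primrec (fun p : ℕ × ℕ × ℕ => half p.2.2.unpair.1 * p.2.1.unpair.2) :=
    nat_mul.comp (prim_half.comp x2) d1
  have M : Primrec (fun p : ℕ × ℕ × ℕ =>
      half p.2.1.unpair.1 * p.2.2.unpair.2 + half p.2.2.unpair.1 * p.2.1.unpair.2) :=
    nat_add.comp w1 w2
  have L : Primrec (fun p : ℕ × ℕ × ℕ => 2 ^ p.1 * cn) :=
    nat_mul.comp (prim_pow2.comp k) (const cn)
  have sh1 : Primrec (fun p : ℕ × ℕ × ℕ =>
      shifted p.2.1.unpair.1 (half p.2.1.unpair.1 * p.2.2.unpair.2)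
        (half p.2.1.unpair.1 * p.2.2.unpair.2 + half p.2.2.unpair.1 * p.2.1.unpair.2)) :=
    prim_shifted.comp (x1.pair (w1.pair M))
  have sh2 : Primrec (fun p : ℕ × ℕ × ℕ =>
      shifted p.2.2.unpair.1 (half p.2.2.unpair.1 * p.2.1.unpair.2)
        (half p.2.1.unpair.1 * p.2.2.unpair.2 + half p.2.2.unpair.1 * p.2.1.unpair.2)) :=
    prim_shifted.comp (x2.pair (w2.pair M))
  have lhs := nat_mul.comp L sh2
  have rhs := nat_add.comp (nat_mul.comp (nat_mul.comp (const (cd - cn)) d1) d2)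
    (nat_mul.comp L sh1)
  have res := PrimrecRel.comp nat_lt lhs rhs
  exact res.decide.to_comp.of_eq (fun p => rfl)

noncomputable def searchB (cn cd : ℕ) (a a' : ℕ → ℚ) (k n : ℕ) : Bool :=
  tst cn cd k (dec (@Encodable.encode ℚ Primcodable.toEncodable (a n)))
    (dec (@Encodable.encode ℚ Primcodable.toEncodable (a' n)))

set_option maxHeartbeats 1000000 in
theorem comp_searchB (cn cd : ℕ) {a a' : ℕ → ℚ} (ha : Computable a) (ha' : Computable a') :
    Computable₂ (searchB cn cd a a') := by
  have h1 : Computable (fun p : ℕ × ℕ =>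
      dec (@Encodable.encode ℚ Primcodable.toEncodable (a p.2))) := by
    apply computable_dec.comp
    apply Computable.encode.comp
    exact ha.comp Computable.snd
  have h2 : Computable (fun p : ℕ × ℕ =>
      dec (@Encodable.encode ℚ Primcodable.toEncodable (a' p.2))) := by
    apply computable_dec.comp
    apply Computable.encode.comp
    exact ha'.comp Computable.snd
  have h3 := (comp_tst cn cd).comp (Computable.fst.pair (h1.pair h2))
  show Computable fun p : ℕ × ℕ => searchB cn cd a a' p.1 p.2
  unfold searchB
  exact h3

theorem searchB_iff (cn cd : ℕ) (hle : cn ≤ cd) (a a' : ℕ → ℚ) (k n : ℕ) :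
    searchB cn cd a a' k n = true ↔
      (cn : ℚ) * (a' n - a n) < ((cd : ℚ) - (cn : ℚ)) * (2⁻¹ : ℚ) ^ k := by
  unfold searchB
  rw [dec_encode, dec_encode]
  exact tst_iff cn cd hle k (a n) (a' n)

theorem comp_find {B : ℕ → ℕ → Bool} (hB : Computable₂ B) (hex : ∀ k, ∃ n, B k n = true) :
    Computable (fun k => Nat.find (hex k)) := by
  have hp : Partrec₂ (fun k n : ℕ => (Part.some (B k n) : Part Bool)) := hB.partrec₂
  apply Partrec.of_eq_tot (Partrec.rfind hp)
  intro k
  apply Nat.mem_rfind.2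
  constructor
  · simp only [Part.mem_some_iff]
    exact (Nat.find_spec (hex k)).symm
  · intro m hm
    simp only [Part.mem_some_iff]
    have := Nat.find_min (hex k) hm
    simpa using Ne.symm this

end CFS


open CFS in
/-- If two increasing computable rational sequences converge to the same real `A` and one
converges strictly faster by a fixed factor `c < 1`, then `A` is computable: some computable
`g : ℕ → ℚ` approximates `A` to within `2⁻ᵏ`. -/
theorem computable_of_faster_sequence (a a' : ℕ → ℚ) (A : ℝ) (c : ℝ) (hc0 : 0 < c)
    (hc1 : c < 1)
    (ha : Computable a) (ha' : Computable a') (hma : StrictMono a) (hma' : StrictMono a')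
    (hA : Tendsto (fun n => (a n : ℝ)) atTop (nhds A))
    (hA' : Tendsto (fun n => (a' n : ℝ)) atTop (nhds A))
    (hfast : ∀ n, A - (a' n : ℝ) < c * (A - (a n : ℝ))) :
    ∃ g : ℕ → ℚ, Computable g ∧ ∀ k : ℕ, |A - (g k : ℝ)| ≤ (2 : ℝ)⁻¹ ^ k := by

  obtain ⟨c', hcc', hc'1⟩ := exists_rat_btwn hc1
  have hc'pos : (0:ℚ) < c' := by
    have h : (0:ℝ) < (c' : ℝ) := lt_trans hc0 hcc'
    exact_mod_cast h
  set cn : ℕ := c'.num.toNat with hcn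
  set cd : ℕ := c'.den with hcd
  have hnum : 0 < c'.num := Rat.num_pos.2 hc'pos
  have hcnZ : (cn : ℤ) = c'.num := Int.toNat_of_nonneg hnum.le
  have hcdpos : 0 < cd := c'.pos
  have hcnpos : 0 < cn := by
    have : (0:ℤ) < (cn : ℤ) := hcnZ ▸ hnum
    exact_mod_cast this
  have hlt : cn < cd := by
    have hq1 : c' < 1 := by exact_mod_cast hc'1
    have h := Rat.num_lt_denom_iff.2 hq1
    have h2 : (cn:ℤ) < (cd:ℤ) := by rw [hcnZ]; exact_mod_cast h
    exact_mod_cast h2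
  have hle : cn ≤ cd := hlt.le
  have hval : (c' : ℝ) = (cn : ℝ) / cd := by
    rw [Rat.cast_def]
    congr 1
    exact_mod_cast congrArg (Int.cast : ℤ → ℝ) hcnZ.symm
  have hcdR : (0:ℝ) < (cd:ℝ) := by exact_mod_cast hcdpos
  have hcnR : (0:ℝ) < (cn:ℝ) := by exact_mod_cast hcnpos
  have haA : ∀ n, (a n : ℝ) < A := by
    intro n
    have mono : Monotone fun i => ((a i : ℚ) : ℝ) := fun i j h => by
      exact Rat.cast_le.mpr (hma.monotone h)
    have h1 : ((a (n+1) : ℚ) : ℝ) ≤ A := mono.ge_of_tendsto hA (n+1)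
    have h2 : ((a n : ℚ):ℝ) < ((a (n+1) : ℚ):ℝ) := by exact_mod_cast hma (Nat.lt_succ_self n)
    linarith
  have ha'A : ∀ n, (a' n : ℝ) < A := by
    intro n
    have mono : Monotone fun i => ((a' i : ℚ) : ℝ) := fun i j h => by
      exact Rat.cast_le.mpr (hma'.monotone h)
    have h1 : ((a' (n+1) : ℚ) : ℝ) ≤ A := mono.ge_of_tendsto hA' (n+1)
    have h2 : ((a' n : ℚ):ℝ) < ((a' (n+1) : ℚ):ℝ) := by
      exact_mod_cast hma' (Nat.lt_succ_self n)
    linarith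
  have hup : ∀ n, ((cd:ℝ) - cn) * A < cd * (a' n : ℝ) - cn * (a n : ℝ) := by
    intro n
    have h1 := hfast n
    have h2 : (0:ℝ) < A - (a n : ℝ) := sub_pos.2 (haA n)
    have h3 : c * (A - (a n:ℝ)) < ((cn:ℝ)/cd) * (A - (a n:ℝ)) := by
      apply mul_lt_mul_of_pos_right _ h2
      calc c < (c' : ℝ) := hcc'
        _ = (cn:ℝ)/cd := hval
    have h4 : A - (a' n : ℝ) < ((cn:ℝ)/cd) * (A - (a n:ℝ)) := lt_trans h1 h3
    rw [div_mul_eq_mul_div, lt_div_iff₀ hcdR] at h4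
    nlinarith [h4]
  have hex : ∀ k, ∃ n, searchB cn cd a a' k n = true := by
    intro k
    have hcdcnQ : (cn:ℚ) < (cd:ℚ) := by exact_mod_cast hlt
    have hcnQ : (0:ℚ) < (cn:ℚ) := by exact_mod_cast hcnpos
    set εq : ℚ := ((cd:ℚ) - cn) * (2⁻¹:ℚ)^k / cn with hεq
    have hεpos : (0:ℚ) < εq := by
      apply div_pos (mul_pos (by linarith) (by positivity)) hcnQ
    have htend : Tendsto (fun n => (a' n : ℝ) - (a n : ℝ)) atTop (nhds 0) := by
      simpa using hA'.sub hA
    have hev := htend.eventually_lt_const (show (0:ℝ) < ((εq:ℚ):ℝ) by exact_mod_cast hεpos)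
    obtain ⟨n, hn⟩ := hev.exists
    refine ⟨n, (searchB_iff cn cd hle a a' k n).2 ?_⟩
    have hQ : (a' n : ℚ) - a n < εq := by
      have : ((a' n - a n : ℚ) : ℝ) < ((εq : ℚ) : ℝ) := by push_cast; push_cast at hn; linarith
      exact_mod_cast this
    rw [hεq, lt_div_iff₀ hcnQ] at hQ
    linarith
  refine ⟨fun k => a' (Nat.find (hex k)), ?_, ?_⟩
  · exact ha'.comp (comp_find (comp_searchB cn cd ha ha') hex)
  · intro k
    set n := Nat.find (hex k) with hn
    have hspec := (searchB_iff cn cd hle a a' k n).1 (Nat.find_spec (hex k))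
    have hspecR : (cn:ℝ) * ((a' n : ℝ) - (a n : ℝ)) < ((cd:ℝ) - cn) * (2⁻¹:ℝ)^k := by
      have h := (Rat.cast_lt (K := ℝ)).2 hspec
      push_cast at h
      convert h using 2
    have h1 := hup n
    have h2 : (a' n : ℝ) < A := ha'A n
    have hcdcn : (0:ℝ) < (cd:ℝ) - cn := by
      have : (cn:ℝ) < cd := by exact_mod_cast hlt
      linarith
    have hkey : A - (a' n:ℝ) < (2⁻¹:ℝ)^k := by nlinarith [h1, hspecR, hcdcn, h2]
    have habs : |A - ((a' n : ℚ):ℝ)| = A - (a' n : ℝ) := abs_of_pos (sub_pos.2 h2)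
    rw [habs]
    linarith
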